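/- Let K be a commutative ring and let A be a finitely presented commutative K-algebra. Then there exist a finitely generated ℤ-subalgebra K' of K and a finitely generated K'-algebra A' such that A is isomorphic to A' ⊗_{K'} K as a K-algebra. In particular, A arises by base change from a finitely generated algebra over a commutative Noetherian ring. -/

import Mathlib

open scoped TensorProduct


set_option maxHeartbeats 1000000 in
/-- Auxiliary: descend a quotient of a polynomial ring along a base ring `K₀`
containing lifts of the generators of the ideal. -/
lemma aux_noeth_approx {K : Type u} {K₀ : Type w} [CommRing K] [CommRing K₀] [Algebra K₀ K]
    {n : ℕ} (I : Ideal (MvPolynomial (Fin n) K)) (t : Finset (MvPolynomial (Fin n) K))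
    (ht : Ideal.span (↑t : Set (MvPolynomial (Fin n) K)) = I)
    (hlift : ∀ p ∈ t, ∃ q : MvPolynomial (Fin n) K₀,
      MvPolynomial.map (algebraMap K₀ K) q = p) :
    Nonempty ((K ⊗[K₀] (MvPolynomial (Fin n) K₀ ⧸
        Ideal.span ((fun q => MvPolynomial.map (algebraMap K₀ K) q) ⁻¹'
          (↑t : Set (MvPolynomial (Fin n) K)))))
      ≃ₐ[K] (MvPolynomial (Fin n) K ⧸ I)) := by
  classical
  set ψ : MvPolynomial (Fin n) K₀ →ₐ[K₀] MvPolynomial (Fin n) K :=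
    MvPolynomial.mapAlgHom (Algebra.ofId K₀ K) with hψ
  have hψapp : ∀ q, ψ q = MvPolynomial.map (algebraMap K₀ K) q := fun q => rfl
  have hψX : ∀ i, ψ (MvPolynomial.X i) = MvPolynomial.X i := by
    intro i; rw [hψapp]; simp
  set I' : Ideal (MvPolynomial (Fin n) K₀) :=
    Ideal.span ((fun q => MvPolynomial.map (algebraMap K₀ K) q) ⁻¹'
      (↑t : Set (MvPolynomial (Fin n) K))) with hI'
  have htI : ∀ p ∈ t, p ∈ I := by intro p hp; rw [← ht]; exact Ideal.subset_span hp
  set g₀ : MvPolynomial (Fin n) K₀ →ₐ[K₀] (MvPolynomial (Fin n) K ⧸ I) :=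
    (((Ideal.Quotient.mkₐ K I)).restrictScalars K₀).comp ψ with hg₀
  have hg₀app : ∀ q, g₀ q = Ideal.Quotient.mk I (ψ q) := fun q => rfl
  have hg₀ker : ∀ a ∈ I', g₀ a = 0 := by
    intro a ha
    refine (Ideal.span_le.mpr ?_ : I' ≤ RingHom.ker g₀) ha
    intro q hq
    have hmem : MvPolynomial.map (algebraMap K₀ K) q ∈ I := htI _ hq
    rw [SetLike.mem_coe, RingHom.mem_ker, hg₀app, hψapp,
      Ideal.Quotient.eq_zero_iff_mem]
    exact hmem
  set g : (MvPolynomial (Fin n) K₀ ⧸ I') →ₐ[K₀] (MvPolynomial (Fin n) K ⧸ I) :=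
    Ideal.Quotient.liftₐ I' g₀ hg₀ker with hg
  set F : (K ⊗[K₀] (MvPolynomial (Fin n) K₀ ⧸ I')) →ₐ[K] (MvPolynomial (Fin n) K ⧸ I) :=
    Algebra.TensorProduct.lift (Algebra.ofId K _) g (fun x y => Commute.all _ _) with hF
  set h₀ : MvPolynomial (Fin n) K →ₐ[K] (K ⊗[K₀] (MvPolynomial (Fin n) K₀ ⧸ I')) :=
    MvPolynomial.aeval (R := K)
      (fun i => (1 : K) ⊗ₜ[K₀] Ideal.Quotient.mk I' (MvPolynomial.X i)) with hh₀
  set ψ' : MvPolynomial (Fin n) K₀ →ₐ[K₀] (K ⊗[K₀] (MvPolynomial (Fin n) K₀ ⧸ I')) :=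
    (Algebra.TensorProduct.includeRight).comp (Ideal.Quotient.mkₐ K₀ I') with hψ'
  have key : ∀ q, h₀ (ψ q) = ψ' q := by
    have hcomp : (h₀.restrictScalars K₀).comp ψ = ψ' := by
      apply MvPolynomial.algHom_ext
      intro i
      simp [hh₀, hψ', hψX]
    intro q
    exact congrArg (fun f => f q) hcomp
  have hh₀ker : ∀ a ∈ I, h₀ a = 0 := by
    intro a ha
    rw [← ht] at ha
    refine (Ideal.span_le.mpr ?_ :
      Ideal.span (↑t : Set (MvPolynomial (Fin n) K)) ≤ RingHom.ker h₀) ha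
    intro p hp
    obtain ⟨q, hq⟩ := hlift p hp
    have hqI' : q ∈ I' := Ideal.subset_span (by simpa [hq] using hp)
    have hkey : h₀ p = ψ' q := by rw [← hq, ← hψapp q]; exact key q
    rw [SetLike.mem_coe, RingHom.mem_ker, hkey, hψ']
    have hq0 : Ideal.Quotient.mk I' q = 0 := Ideal.Quotient.eq_zero_iff_mem.mpr hqI'
    simp [hq0]
  set G : (MvPolynomial (Fin n) K ⧸ I) →ₐ[K] (K ⊗[K₀] (MvPolynomial (Fin n) K₀ ⧸ I')) :=
    Ideal.Quotient.liftₐ I h₀ hh₀ker with hG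
  have hFh : F.comp h₀ = Ideal.Quotient.mkₐ K I := by
    apply MvPolynomial.algHom_ext
    intro i
    have hgX : g (Ideal.Quotient.mk I' (MvPolynomial.X i))
        = Ideal.Quotient.mk I (ψ (MvPolynomial.X i)) := Ideal.Quotient.liftₐ_apply _ _ _ _
    simp [hF, hh₀, Algebra.TensorProduct.lift_tmul, hgX, hψX]
  refine ⟨AlgEquiv.ofAlgHom F G ?_ ?_⟩
  · apply AlgHom.ext
    intro x
    obtain ⟨p, rfl⟩ := Ideal.Quotient.mk_surjective x
    have h1 : G (Ideal.Quotient.mk I p) = h₀ p := Ideal.Quotient.liftₐ_apply _ _ _ _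
    have h2 := congrArg (fun f => f p) hFh
    simpa [h1] using h2
  · apply Algebra.TensorProduct.ext
    · exact Subsingleton.elim _ _
    · apply AlgHom.ext
      intro x
      obtain ⟨q, rfl⟩ := Ideal.Quotient.mk_surjective x
      have hgq : g (Ideal.Quotient.mk I' q) = Ideal.Quotient.mk I (ψ q) :=
        Ideal.Quotient.liftₐ_apply _ _ _ _
      have hGq : G (Ideal.Quotient.mk I (ψ q)) = h₀ (ψ q) := Ideal.Quotient.liftₐ_apply _ _ _ _
      have hmain : G (F ((1:K) ⊗ₜ[K₀] Ideal.Quotient.mk I' q)) = ψ' q := by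
        rw [hF]
        simp only [Algebra.TensorProduct.lift_tmul]
        simp only [map_one, one_mul, Algebra.ofId_apply]
        rw [hgq, hGq, key q]
      simpa [hψ'] using hmain

set_option synthInstance.maxHeartbeats 1000000 in
set_option maxHeartbeats 1000000 in
/-- Lift a polynomial whose coefficients lie in a subalgebra. -/
lemma lift_of_coeff_mem {K : Type u} [CommRing K] (K' : Subalgebra ℤ K)
    {n : ℕ} (p : MvPolynomial (Fin n) K) (h : ∀ m, p.coeff m ∈ K') :
    ∃ q : MvPolynomial (Fin n) ↥K', MvPolynomial.map (algebraMap ↥K' K) q = p := by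
  refine ⟨∑ m ∈ p.support, MvPolynomial.monomial m ⟨p.coeff m, h m⟩, ?_⟩
  rw [map_sum]
  simp only [MvPolynomial.map_monomial]
  exact (p.as_sum).symm

set_option synthInstance.maxHeartbeats 1000000 in
set_option maxHeartbeats 1000000 in
/-- **Noetherian approximation** (Section 8 of the paper).  Every finitely
presented commutative algebra `A` over a commutative ring `K` arises by base
change from a finitely generated algebra `A'` over a finitely generated (hence
Noetherian) `ℤ`-subalgebra `K'` of `K`. -/
theorem finitePresentation_descends_to_finitely_generated_subring
    {K : Type u} [CommRing K] {A : Type v} [CommRing A] [Algebra K A]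
    (hfp : Algebra.FinitePresentation K A) :
    ∃ (K' : Subalgebra ℤ K) (A' : Type u) (_ : CommRing A') (_ : Algebra K' A'),
      K'.FG ∧ IsNoetherianRing K' ∧ Algebra.FiniteType K' A' ∧
      Nonempty ((K ⊗[K'] A') ≃ₐ[K] A) := by
  classical
  obtain ⟨n, I, e, hIfg⟩ := Algebra.FinitePresentation.iff.mp hfp
  obtain ⟨t, ht⟩ := hIfg
  set s : Finset K := t.sup MvPolynomial.coeffs with hs
  set K' : Subalgebra ℤ K := Algebra.adjoin ℤ (↑s : Set K) with hK'
  have hfg : K'.FG := Subalgebra.fg_adjoin_finset s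
  haveI hft : Algebra.FiniteType ℤ ↥K' := (Subalgebra.fg_iff_finiteType K').mp hfg
  have hNoeth : IsNoetherianRing ↥K' := Algebra.FiniteType.isNoetherianRing ℤ ↥K'
  have hcoeff : ∀ p ∈ t, ∀ m, p.coeff m ∈ K' := by
    intro p hp m
    by_cases h0 : p.coeff m = 0
    · rw [h0]; exact K'.zero_mem
    · exact Algebra.subset_adjoin
        (Finset.le_sup (f := MvPolynomial.coeffs) hp (p.coeff_mem_coeffs m h0))
  have hlift : ∀ p ∈ t, ∃ q : MvPolynomial (Fin n) ↥K',
      MvPolynomial.map (algebraMap ↥K' K) q = p :=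
    fun p hp => lift_of_coeff_mem K' p (hcoeff p hp)
  obtain ⟨e1⟩ := aux_noeth_approx I t ht hlift
  refine ⟨K', MvPolynomial (Fin n) ↥K' ⧸
      Ideal.span ((fun q => MvPolynomial.map (algebraMap ↥K' K) q) ⁻¹'
        (↑t : Set (MvPolynomial (Fin n) K))),
    inferInstance, inferInstance, hfg, hNoeth, ?_, ⟨e1.trans e⟩⟩
  exact Algebra.FiniteType.of_surjective
    (Ideal.Quotient.mkₐ ↥K' _) Ideal.Quotient.mk_surjective
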